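/- arXiv:1605.07908 — 2 statements merged into one kernel-verified Lean document; each statement's English description precedes it below -/
import Mathlib

section
/- Elementary identity for the L² norm: for any open set A ⊆ X and u ∈ L²(X, m), ∫_A u² dm = sup over finite disjoint families of open subsets A_k ⊆ A with m(A_k) > 0 of Σ_k m(A_k)^{-1} ( ∫_{A_k} |u| dm )². -/
open MeasureTheory Bornology
open scoped ENNReal NNReal

section auxx
lemma alg_aux {μ a c : ℝ} (hμ : 0 ≤ μ) (h0 : μ = 0 → a = 0) :
    2*c*a - c^2*μ ≤ μ⁻¹ * a^2 := by
  rcases eq_or_lt_of_le hμ with h | h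
  · simp [h0 h.symm, ← h]
  · have key : μ⁻¹ * a^2 - (2*c*a - c^2*μ) = μ⁻¹ * (a - c*μ)^2 := by
      field_simp; ring
    nlinarith [mul_nonneg (inv_nonneg.mpr hμ) (sq_nonneg (a - c*μ))]

variable {X : Type*} [MeasurableSpace X] {m : Measure X}

lemma expand_aux {v : X → ℝ} {t : Set X} (ht : m t ≠ ⊤)
    (h1 : IntegrableOn v t m) (h2 : IntegrableOn (fun x => v x ^ 2) t m) (c : ℝ) :
    ∫ x in t, (v x - c)^2 ∂m
      = ∫ x in t, v x ^ 2 ∂m - 2*c*(∫ x in t, v x ∂m) + c^2*(m t).toReal := by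
  have hconst : IntegrableOn (fun _ : X => c^2) t m :=
    integrableOn_const (ht.lt_top).ne
  have h3 : IntegrableOn (fun x => 2*c*v x) t m := h1.const_mul _
  have h4 : IntegrableOn (fun x => v x ^ 2 - 2*c*v x) t m := h2.sub h3
  have : ∀ x, (v x - c)^2 = (v x ^ 2 - 2*c*v x) + c^2 := by intro x; ring
  simp_rw [this]
  rw [integral_add h4 hconst, integral_sub h2 h3, integral_const_mul,
    setIntegral_const, smul_eq_mul, measureReal_def]
  ring

lemma ineq_aux {v : X → ℝ} {t : Set X} (ht : m t ≠ ⊤)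
    (h1 : IntegrableOn v t m) (h2 : IntegrableOn (fun x => v x ^ 2) t m) (c : ℝ) :
    ∫ x in t, v x ^ 2 ∂m - ∫ x in t, (v x - c)^2 ∂m
      ≤ ((m t).toReal)⁻¹ * (∫ x in t, v x ∂m)^2 := by
  rw [expand_aux ht h1 h2 c]
  have h0 : (m t).toReal = 0 → ∫ x in t, v x ∂m = 0 := by
    intro h
    have : m t = 0 := by
      rcases (ENNReal.toReal_eq_zero_iff _).mp h with h' | h'
      · exact h'
      · exact absurd h' ht
    rw [Measure.restrict_eq_zero.mpr this, integral_zero_measure]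
  have := alg_aux (a := ∫ x in t, v x ∂m) (c := c) ENNReal.toReal_nonneg h0
  linarith

lemma cs_aux {v : X → ℝ} {t : Set X}
    (h1 : m t ≠ ⊤ → IntegrableOn v t m) (h2 : IntegrableOn (fun x => v x ^ 2) t m) :
    ((m t).toReal)⁻¹ * (∫ x in t, v x ∂m)^2 ≤ ∫ x in t, v x ^ 2 ∂m := by
  rcases eq_or_ne (m t) ⊤ with h | h
  · rw [h]
    simp only [ENNReal.toReal_top, inv_zero, zero_mul]
    exact integral_nonneg fun x => sq_nonneg _
  rcases eq_or_ne (m t) 0 with h0 | h0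
  · rw [Measure.restrict_eq_zero.mpr h0]
    simp
  have hμ : 0 < (m t).toReal := ENNReal.toReal_pos h0 h
  set a := ∫ x in t, v x ∂m
  set c := ((m t).toReal)⁻¹ * a with hc
  have key := expand_aux (v := v) h (h1 h) h2 c
  have hnn : 0 ≤ ∫ x in t, (v x - c)^2 ∂m := integral_nonneg fun x => sq_nonneg _
  have hval : 2*c*a - c^2*(m t).toReal = ((m t).toReal)⁻¹ * a^2 := by
    rw [hc]; field_simp; ring
  linarith

lemma sep_aux {Y : Type*} [TopologicalSpace Y] [NormalSpace Y] {N : ℕ}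
    (F : Fin N → Set Y) (hcl : ∀ j, IsClosed (F j)) (hdisj : Pairwise (Function.onFun Disjoint F)) :
    ∃ U : Fin N → Set Y, (∀ j, IsOpen (U j)) ∧ (∀ j, F j ⊆ U j) ∧
      Pairwise (Function.onFun Disjoint U) := by
  have hsep : ∀ j : Fin N, ∃ W W' : Set Y, IsOpen W ∧ IsOpen W' ∧ F j ⊆ W ∧
      (⋃ i ∈ ({j}ᶜ : Set (Fin N)), F i) ⊆ W' ∧ Disjoint W W' := by
    intro j
    have hc2 : IsClosed (⋃ i ∈ ({j}ᶜ : Set (Fin N)), F i) :=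
      Set.Finite.isClosed_biUnion (Set.toFinite _) fun i _ => hcl i
    have hd : Disjoint (F j) (⋃ i ∈ ({j}ᶜ : Set (Fin N)), F i) := by
      rw [Set.disjoint_iUnion₂_right]
      intro i hi
      exact hdisj (fun h => hi (by simp [h.symm]))
    obtain ⟨W, W', hWo, hW'o, h1, h2, h3⟩ := normal_separation (hcl j) hc2 hd
    exact ⟨W, W', hWo, hW'o, h1, h2, h3⟩
  choose W W' hWo hW'o hFW hFW' hWW' using hsep
  refine ⟨fun j => W j ∩ ⋂ i ∈ ({j}ᶜ : Set (Fin N)), W' i, fun j => ?_, fun j => ?_, ?_⟩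
  · exact (hWo j).inter (Set.Finite.isOpen_biInter (Set.toFinite _) fun i _ => hW'o i)
  · refine Set.subset_inter (hFW j) ?_
    refine Set.subset_iInter₂ fun i hi => ?_
    refine (Set.subset_iUnion₂ (s := fun l (_ : l ∈ ({i}ᶜ : Set (Fin N))) => F l) j ?_).trans (hFW' i)
    simpa using fun h => hi (by simp [h])
  · intro j l hjl
    have h1 : W j ∩ ⋂ i ∈ ({j}ᶜ : Set (Fin N)), W' i ⊆ W j := Set.inter_subset_left
    have h2 : W l ∩ ⋂ i ∈ ({l}ᶜ : Set (Fin N)), W' i ⊆ W' j := by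
      refine Set.inter_subset_right.trans ?_
      have : j ∈ ({l}ᶜ : Set (Fin N)) := by simp [hjl]
      exact Set.iInter₂_subset j this
    exact Set.disjoint_of_subset h1 h2 (hWW' j)

lemma union_le_aux {f : X → ℝ} {s t : Set X} (hs : MeasurableSet s) (ht : MeasurableSet t)
    (hfs : IntegrableOn f s m) (hft : IntegrableOn f t m) (h0 : ∀ x, 0 ≤ f x) :
    ∫ x in s ∪ t, f x ∂m ≤ ∫ x in s, f x ∂m + ∫ x in t, f x ∂m := by
  rw [← Set.union_diff_self,
    setIntegral_union disjoint_sdiff_self_right (ht.diff hs) hfs (hft.mono_set Set.diff_subset)]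
  have : ∫ x in t \ s, f x ∂m ≤ ∫ x in t, f x ∂m :=
    setIntegral_mono_set hft (Filter.Eventually.of_forall h0) (Set.diff_subset.eventuallyLE)
  linarith

lemma split_aux {f : X → ℝ} {s t : Set X} (hs : MeasurableSet s) (ht : MeasurableSet t)
    (hst : s ⊆ t) (hft : IntegrableOn f t m) :
    ∫ x in t, f x ∂m = ∫ x in s, f x ∂m + ∫ x in t \ s, f x ∂m := by
  rw [← setIntegral_union disjoint_sdiff_self_right (ht.diff hs) (hft.mono_set hst)
    (hft.mono_set Set.diff_subset), Set.union_diff_cancel hst]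

end auxx

set_option maxHeartbeats 2000000 in
/-- Elementary identity for the `L²` norm: for `u ∈ L²(X,m)` and `A ⊆ X` open,
`∫_A u² dm` equals the supremum, over finite disjoint families of open subsets
`B k ⊆ A` with `m (B k) > 0`, of `Σ_k m(B k)⁻¹ (∫_{B k} |u| dm)²`. -/
theorem stmt_6 {X : Type*} [MetricSpace X] [MeasurableSpace X] [BorelSpace X]
    (m : Measure X) (hloc : ∀ s : Set X, IsBounded s → m s < ⊤)
    (u : X → ℝ) (hu : MemLp u 2 m) (A : Set X) (hA : IsOpen A) :
    ∫ x in A, (u x) ^ 2 ∂m =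
      sSup {r : ℝ | ∃ (n : ℕ) (B : Fin n → Set X),
        (∀ k, IsOpen (B k)) ∧ (∀ k, B k ⊆ A) ∧ Pairwise (Function.onFun Disjoint B) ∧
        (∀ k, 0 < m (B k)) ∧
        r = ∑ k, ((m (B k)).toReal)⁻¹ * (∫ x in B k, |u x| ∂m) ^ 2} := by
  classical
  obtain ⟨u₁, hu₁sm, hequ⟩ : ∃ u₁, StronglyMeasurable u₁ ∧ u =ᵐ[m] u₁ :=
    ⟨hu.1.mk u, hu.1.stronglyMeasurable_mk, hu.1.ae_eq_mk⟩
  set v : X → ℝ := fun x => |u₁ x| with hv_def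
  have hvm : Measurable v := hu₁sm.measurable.abs
  have hv0 : ∀ x, 0 ≤ v x := fun x => abs_nonneg _
  have hv : MemLp v 2 m := by
    simpa only [Real.norm_eq_abs] using (MemLp.ae_eq hequ hu).norm
  have hsq : ∀ t : Set X, ∫ x in t, u x ^ 2 ∂m = ∫ x in t, v x ^ 2 ∂m := by
    intro t
    apply integral_congr_ae
    filter_upwards [ae_restrict_of_ae hequ] with x hx
    rw [hx, hv_def]; simp [sq_abs]
  have habs1 : ∀ t : Set X, ∫ x in t, |u x| ∂m = ∫ x in t, v x ∂m := by
    intro t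
    apply integral_congr_ae
    filter_upwards [ae_restrict_of_ae hequ] with x hx
    rw [hx]
  have hSeq : {r : ℝ | ∃ (n : ℕ) (B : Fin n → Set X),
        (∀ k, IsOpen (B k)) ∧ (∀ k, B k ⊆ A) ∧ Pairwise (Function.onFun Disjoint B) ∧
        (∀ k, 0 < m (B k)) ∧
        r = ∑ k, ((m (B k)).toReal)⁻¹ * (∫ x in B k, |u x| ∂m) ^ 2}
      = {r : ℝ | ∃ (n : ℕ) (B : Fin n → Set X),
        (∀ k, IsOpen (B k)) ∧ (∀ k, B k ⊆ A) ∧ Pairwise (Function.onFun Disjoint B) ∧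
        (∀ k, 0 < m (B k)) ∧
        r = ∑ k, ((m (B k)).toReal)⁻¹ * (∫ x in B k, v x ∂m) ^ 2} := by
    ext r
    refine exists_congr fun n => exists_congr fun B => and_congr_right fun _ =>
      and_congr_right fun _ => and_congr_right fun _ => and_congr_right fun _ => ?_
    rw [show (∑ k, ((m (B k)).toReal)⁻¹ * (∫ x in B k, |u x| ∂m) ^ 2)
        = ∑ k, ((m (B k)).toReal)⁻¹ * (∫ x in B k, v x ∂m) ^ 2 from
      Finset.sum_congr rfl fun k _ => by rw [habs1 (B k)]]
  rw [hsq A, hSeq]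
  set S := {r : ℝ | ∃ (n : ℕ) (B : Fin n → Set X),
        (∀ k, IsOpen (B k)) ∧ (∀ k, B k ⊆ A) ∧ Pairwise (Function.onFun Disjoint B) ∧
        (∀ k, 0 < m (B k)) ∧
        r = ∑ k, ((m (B k)).toReal)⁻¹ * (∫ x in B k, v x ∂m) ^ 2} with hS_def
  set I := ∫ x in A, v x ^ 2 ∂m with hI_def
  have hv2 : Integrable (fun x => v x ^ 2) m := hv.integrable_sq
  have hIv : ∀ t : Set X, m t ≠ ⊤ → IntegrableOn v t m := by
    intro t ht
    haveI : IsFiniteMeasure (m.restrict t) :=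
      ⟨by rwa [Measure.restrict_apply_univ, lt_top_iff_ne_top]⟩
    exact (hv.restrict t).integrable one_le_two
  have hIq : ∀ (c : ℝ) (t : Set X), m t ≠ ⊤ →
      IntegrableOn (fun x => (v x - c)^2) t m := by
    intro c t ht
    have h1 := hIv t ht
    have h2 : IntegrableOn (fun x => v x ^ 2) t m := hv2.integrableOn
    have hfun : (fun x => (v x - c)^2) = fun x => (v x ^ 2 - 2*c*v x) + c^2 := by
      funext x; ring
    rw [hfun]
    exact (h2.sub (h1.const_mul _)).add (integrableOn_const (ht.lt_top).ne)
  have h0S : (0:ℝ) ∈ S := by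
    refine ⟨0, fun i => i.elim0, fun i => i.elim0, fun i => i.elim0, ?_, fun i => i.elim0, ?_⟩
    · intro i; exact i.elim0
    · simp
  have hub : ∀ r ∈ S, r ≤ I := by
    rintro r ⟨n, B, hBo, hBA, hBd, hBpos, rfl⟩
    calc ∑ k, ((m (B k)).toReal)⁻¹ * (∫ x in B k, v x ∂m) ^ 2
        ≤ ∑ k, ∫ x in B k, v x ^ 2 ∂m :=
          Finset.sum_le_sum fun k _ => cs_aux (hIv (B k)) hv2.integrableOn
      _ = ∫ x in ⋃ k, B k, v x ^ 2 ∂m :=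
          (integral_iUnion_fintype (fun k => (hBo k).measurableSet) hBd
            (fun k => hv2.integrableOn)).symm
      _ ≤ I :=
          setIntegral_mono_set hv2.integrableOn
            (Filter.Eventually.of_forall fun x => sq_nonneg _)
            ((Set.iUnion_subset hBA).eventuallyLE)
  have hbdd : BddAbove S := ⟨I, hub⟩
  refine le_antisymm ?_ (csSup_le ⟨0, h0S⟩ hub)
  refine le_of_forall_pos_le_add fun ε hε => ?_
  rcases le_or_gt I ε with hIe | hIe
  · have h0le : (0:ℝ) ≤ sSup S := le_csSup hbdd h0S
    linarith
  have hX : Nonempty X := by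
    by_contra h
    rw [not_nonempty_iff] at h
    rw [hI_def, Set.eq_empty_of_isEmpty A] at hIe
    simp at hIe
    linarith
  suffices hex : ∃ r ∈ S, I - ε ≤ r by
    obtain ⟨r, hr, hr2⟩ := hex
    have := le_csSup hbdd hr
    linarith
  -- Truncation to a bounded piece
  obtain ⟨x₀⟩ := hX
  have hball : ∀ R : ℝ, m (Metric.ball x₀ R) < ⊤ := fun R => hloc _ Metric.isBounded_ball
  have hmono : Monotone (fun n : ℕ => A ∩ Metric.ball x₀ n) := by
    intro a b hab
    exact Set.inter_subset_inter_right _ (Metric.ball_subset_ball (by exact_mod_cast hab))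
  have hUnion : (⋃ n : ℕ, A ∩ Metric.ball x₀ n) = A := by
    ext x
    simp only [Set.mem_iUnion, Set.mem_inter_iff, Metric.mem_ball]
    constructor
    · rintro ⟨n, hn, -⟩; exact hn
    · intro hx
      obtain ⟨n, hn⟩ := exists_nat_gt (dist x x₀)
      exact ⟨n, hx, hn⟩
  have htend := tendsto_setIntegral_of_monotone
    (fun n : ℕ => hA.measurableSet.inter Metric.isOpen_ball.measurableSet) hmono
    (by rw [hUnion]; exact hv2.integrableOn)
  rw [hUnion] at htend
  obtain ⟨R, hR⟩ := (Metric.tendsto_atTop.mp htend (ε/8) (by positivity)) |>.imp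
    (fun R hRR => hRR R le_rfl)
  set Bl : Set X := Metric.ball x₀ (R : ℝ) with hBl_def
  set A' : Set X := A ∩ Bl with hA'_def
  have hA'm : MeasurableSet A' := hA.measurableSet.inter Metric.isOpen_ball.measurableSet
  have hA'fin : m A' ≠ ⊤ := (lt_of_le_of_lt (measure_mono Set.inter_subset_right) (hball R)).ne
  have hI' : I - ε/8 ≤ ∫ x in A', v x ^ 2 ∂m := by
    rw [Real.dist_eq, abs_sub_lt_iff] at hR
    have := hR.2
    linarith
  set MA : ℝ := (m A').toReal with hMA_def
  have hMA0 : 0 ≤ MA := ENNReal.toReal_nonneg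
  -- step size h
  set h : ℝ := Real.sqrt (ε/8 / (MA+1)) with hh_def
  have hh : 0 < h := Real.sqrt_pos.mpr (by positivity)
  have hh2 : h^2 = ε/8 / (MA+1) := Real.sq_sqrt (by positivity)
  have hhMA : h^2 * MA ≤ ε/8 := by
    rw [hh2]
    rw [div_mul_eq_mul_div, div_le_iff₀ (by positivity)]
    nlinarith
  -- absolute continuity
  have habs : ∀ ε' : ℝ, 0 < ε' → ∃ δ : ℝ≥0∞, 0 < δ ∧
      ∀ t : Set X, m t < δ → ∫ x in t, v x ^ 2 ∂m ≤ ε' := by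
    intro ε' hε'
    obtain ⟨δ, hδ, hδ'⟩ := exists_pos_setLIntegral_lt_of_measure_lt
      (μ := m) hv2.lintegral_lt_top.ne (ENNReal.ofReal_pos.mpr hε').ne'
    refine ⟨δ, hδ, fun t ht => ?_⟩
    have heq : ∫ x in t, v x ^ 2 ∂m
        = (∫⁻ x in t, ENNReal.ofReal (v x ^ 2) ∂m).toReal := by
      rw [integral_eq_lintegral_of_nonneg_ae
        (Filter.Eventually.of_forall fun x => sq_nonneg _)
        (hv2.aestronglyMeasurable.restrict)]
    rw [heq]
    calc (∫⁻ x in t, ENNReal.ofReal (v x ^ 2) ∂m).toReal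
        ≤ (ENNReal.ofReal ε').toReal :=
          ENNReal.toReal_mono ENNReal.ofReal_ne_top (hδ' t ht).le
      _ = ε' := ENNReal.toReal_ofReal hε'.le
  -- choice of N
  obtain ⟨δ₁, hδ₁, hδ₁'⟩ := habs (ε/8) (by positivity)
  set T : ℕ → Set X := fun n => A' ∩ {x | ((n:ℝ)+1)*h ≤ v x} with hT_def
  have hTm : ∀ n, MeasurableSet (T n) := fun n =>
    hA'm.inter (measurableSet_le measurable_const hvm)
  have hTanti : Antitone T := by
    intro a b hab
    refine Set.inter_subset_inter_right _ ?_
    intro x hx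
    simp only [Set.mem_setOf_eq] at hx ⊢
    have : ((a:ℝ)+1)*h ≤ ((b:ℝ)+1)*h := by
      have : (a:ℝ) ≤ b := by exact_mod_cast hab
      nlinarith
    linarith
  have hTinter : (⋂ n, T n) = ∅ := by
    rw [Set.eq_empty_iff_forall_notMem]
    intro x hx
    simp only [Set.mem_iInter] at hx
    obtain ⟨n, hn⟩ := exists_nat_gt (v x / h)
    have h1 := (hx n).2
    simp only [Set.mem_setOf_eq] at h1
    rw [div_lt_iff₀ hh] at hn
    nlinarith
  have htendT := tendsto_measure_iInter_atTop (μ := m)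
    (fun n => (hTm n).nullMeasurableSet) hTanti
    ⟨0, (lt_of_le_of_lt (measure_mono (show T 0 ⊆ Metric.ball x₀ (R:ℝ) from
      Set.inter_subset_left.trans Set.inter_subset_right)) (hball R)).ne⟩
  rw [hTinter, measure_empty] at htendT
  have hexN : ∀ᶠ n in Filter.atTop, m (T n) < δ₁ :=
    htendT.eventually_lt_const hδ₁
  obtain ⟨N, hN⟩ := hexN.exists
  have hS2 : ∫ x in T N, v x ^ 2 ∂m ≤ ε/8 := hδ₁' _ hN
  -- the sets E j
  set c : Fin N → ℝ := fun j => ((j:ℝ)+1)*h with hc_def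
  have hc0 : ∀ j, 0 < c j := by
    intro j
    have : (0:ℝ) ≤ (j:ℝ) := by positivity
    show (0:ℝ) < ((j:ℝ)+1)*h
    nlinarith
  have hcN : ∀ j, c j ≤ ((N:ℝ)+1)*h := by
    intro j
    have : (j:ℝ) + 1 ≤ (N:ℝ) := by
      have := j.2
      exact_mod_cast Nat.succ_le_of_lt this
    have h1 : (N:ℝ) ≤ (N:ℝ)+1 := by linarith
    show ((j:ℝ)+1)*h ≤ ((N:ℝ)+1)*h
    have := hh.le
    nlinarith
  set E : Fin N → Set X := fun j => A' ∩ {x | c j ≤ v x ∧ v x < c j + h} with hE_def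
  have hEm : ∀ j, MeasurableSet (E j) := by
    intro j
    refine hA'm.inter ?_
    have : {x | c j ≤ v x ∧ v x < c j + h} = v ⁻¹' (Set.Ico (c j) (c j + h)) := rfl
    rw [this]
    exact hvm measurableSet_Ico
  have hEsub : ∀ j, E j ⊆ A' := fun j => Set.inter_subset_left
  have hEfin : ∀ j, m (E j) ≠ ⊤ := fun j =>
    (lt_of_le_of_lt (measure_mono (hEsub j)) hA'fin.lt_top).ne
  have hEdisj : Pairwise (Function.onFun Disjoint E) := by
    intro j l hjl
    rw [Function.onFun, Set.disjoint_left]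
    rintro x ⟨-, hx1, hx2⟩ ⟨-, hy1, hy2⟩
    rcases lt_or_gt_of_ne (fun hh' : (j:ℕ) = (l:ℕ) => hjl (Fin.ext hh')) with hlt | hlt
    · have : ((j:ℝ))+1 ≤ (l:ℝ) := by exact_mod_cast Nat.succ_le_of_lt hlt
      simp only [hc_def] at hx1 hx2 hy1 hy2
      nlinarith
    · have : ((l:ℝ))+1 ≤ (j:ℝ) := by exact_mod_cast Nat.succ_le_of_lt hlt
      simp only [hc_def] at hx1 hx2 hy1 hy2
      nlinarith
  have hcover : A' ⊆ (⋃ j, E j) ∪ ((A' ∩ {x | v x < h}) ∪ T N) := by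
    intro x hx
    by_cases h1 : v x < h
    · exact Or.inr (Or.inl ⟨hx, h1⟩)
    by_cases h2 : ((N:ℝ)+1)*h ≤ v x
    · exact Or.inr (Or.inr ⟨hx, h2⟩)
    push_neg at h1 h2
    set k : ℕ := ⌊v x / h⌋₊ with hk_def
    have hk1 : 1 ≤ k := by
      rw [hk_def]
      refine Nat.le_floor ?_
      rw [Nat.cast_one, le_div_iff₀ hh]
      linarith
    have hkN : k ≤ N := by
      have : k < N + 1 := by
        rw [hk_def]
        rw [Nat.floor_lt (by positivity)]
        rw [div_lt_iff₀ hh]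
        push_cast
        linarith
      omega
    have hkle : (k:ℝ) * h ≤ v x := by
      rw [← le_div_iff₀ hh, hk_def]
      exact Nat.floor_le (by positivity)
    have hklt : v x < ((k:ℝ)+1) * h := by
      rw [← div_lt_iff₀ hh, hk_def]
      exact Nat.lt_floor_add_one _
    refine Or.inl (Set.mem_iUnion.mpr ⟨⟨k-1, by omega⟩, hx, ?_, ?_⟩)
    · show ((((⟨k-1, by omega⟩ : Fin N) : ℕ):ℝ)+1)*h ≤ v x
      simp only
      rw [Nat.cast_sub hk1, Nat.cast_one]
      have heq : ((k:ℝ) - 1 + 1) * h = (k:ℝ) * h := by ring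
      rw [heq]
      exact hkle
    · show v x < ((((⟨k-1, by omega⟩ : Fin N) : ℕ):ℝ)+1)*h + h
      simp only
      rw [Nat.cast_sub hk1, Nat.cast_one]
      have heq : ((k:ℝ) - 1 + 1) * h + h = ((k:ℝ) + 1) * h := by ring
      rw [heq]
      exact hklt
  -- small parameters
  obtain ⟨δ₂, hδ₂, hδ₂'⟩ := habs (ε/(16*((N:ℝ)+1))) (by positivity)
  set δ₃ : ℝ := (ε/8) / (2*(N:ℝ)*(((N:ℝ)+1)*h)^2 + 1) with hδ₃_def
  have hδ₃ : 0 < δ₃ := by rw [hδ₃_def]; positivity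
  set δ : ℝ≥0∞ := min δ₂ (ENNReal.ofReal δ₃) with hδ_def
  have hδpos : δ ≠ 0 := by
    rw [hδ_def]
    exact (lt_min hδ₂ (ENNReal.ofReal_pos.mpr hδ₃)).ne'
  -- regularity
  haveI hfin' : IsFiniteMeasure (m.restrict Bl) :=
    ⟨by rw [Measure.restrict_apply_univ]; exact hball R⟩
  have hreg : ∀ j : Fin N, ∃ F V : Set X, IsClosed F ∧ F ⊆ E j ∧ IsOpen V ∧ F ⊆ V ∧
      V ⊆ A ∩ Bl ∧ m (E j \ F) < δ ∧ m (V \ F) < δ := by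
    intro j
    obtain ⟨F, hFE, hFc, hFμ⟩ := (hEm j).exists_isClosed_diff_lt (μ := m.restrict Bl)
      (measure_ne_top _ _) hδpos
    obtain ⟨V0, hFV0, hV0o, -, hV0μ⟩ := hFc.measurableSet.exists_isOpen_diff_lt
      (μ := m.restrict Bl) (measure_ne_top _ _) hδpos
    have hEBl : E j ⊆ Bl := (hEsub j).trans Set.inter_subset_right
    have hFA' : F ⊆ A' := hFE.trans (hEsub j)
    refine ⟨F, V0 ∩ (A ∩ Bl), hFc, hFE, hV0o.inter (hA.inter Metric.isOpen_ball),
      Set.subset_inter hFV0 hFA', Set.inter_subset_right, ?_, ?_⟩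
    · have hmeas : MeasurableSet (E j \ F) := (hEm j).diff hFc.measurableSet
      have : m (E j \ F) = (m.restrict Bl) (E j \ F) := by
        rw [Measure.restrict_apply hmeas,
          Set.inter_eq_self_of_subset_left (Set.diff_subset.trans hEBl)]
      rw [this]
      exact hFμ
    · have hmeas : MeasurableSet (V0 \ F) := hV0o.measurableSet.diff hFc.measurableSet
      refine lt_of_le_of_lt ?_ hV0μ
      rw [Measure.restrict_apply hmeas]
      refine measure_mono ?_
      intro x hx
      exact ⟨⟨hx.1.1, hx.2⟩, hx.1.2.2⟩
  choose F V hFc hFE hVo hFV hVsub hEFμ hVFμ using hreg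
  have hFdisj : Pairwise (Function.onFun Disjoint F) := fun j l hjl =>
    (hEdisj hjl).mono (hFE j) (hFE l)
  obtain ⟨U, hUo, hFU, hUdisj⟩ := sep_aux F hFc hFdisj
  set B : Fin N → Set X := fun j => U j ∩ V j with hB_def
  have hBo : ∀ j, IsOpen (B j) := fun j => (hUo j).inter (hVo j)
  have hBA : ∀ j, B j ⊆ A := fun j =>
    Set.inter_subset_right.trans ((hVsub j).trans Set.inter_subset_left)
  have hBBl : ∀ j, B j ⊆ Bl := fun j =>
    Set.inter_subset_right.trans ((hVsub j).trans Set.inter_subset_right)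
  have hBdisj : Pairwise (Function.onFun Disjoint B) := fun j l hjl =>
    (hUdisj hjl).mono Set.inter_subset_left Set.inter_subset_left
  have hFB : ∀ j, F j ⊆ B j := fun j => Set.subset_inter (hFU j) (hFV j)
  have hBfin : ∀ j, m (B j) ≠ ⊤ := fun j =>
    (lt_of_le_of_lt (measure_mono (hBBl j)) (hball R)).ne
  have hBFμ : ∀ j, m (B j \ F j) < δ := by
    intro j
    refine lt_of_le_of_lt (measure_mono ?_) (hVFμ j)
    intro x hx
    exact ⟨hx.1.2, hx.2⟩
  -- the candidate family
  set K : Finset (Fin N) := Finset.univ.filter (fun j => 0 < m (B j)) with hK_def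
  set r : ℝ := ∑ j ∈ K, ((m (B j)).toReal)⁻¹ * (∫ x in B j, v x ∂m)^2 with hr_def
  have hrS : r ∈ S := by
    refine ⟨K.card, fun i => B ((K.equivFin.symm i) : Fin N), fun i => hBo _,
      fun i => hBA _, ?_, ?_, ?_⟩
    · intro i i' hii'
      refine hBdisj (fun heq => hii' ?_)
      exact K.equivFin.symm.injective (Subtype.coe_injective heq)
    · intro i
      exact (Finset.mem_filter.mp (K.equivFin.symm i).2).2
    · rw [hr_def, ← Finset.sum_coe_sort K
        (fun j => ((m (B j)).toReal)⁻¹ * (∫ x in B j, v x ∂m)^2)]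
      exact (Equiv.sum_comp K.equivFin.symm
        (fun j : {x // x ∈ K} => ((m (B (j:Fin N))).toReal)⁻¹
          * (∫ x in B (j:Fin N), v x ∂m)^2)).symm
  refine ⟨r, hrS, ?_⟩
  -- lower estimate for r
  have key1 : ∀ j ∈ K, ∫ x in B j, v x ^ 2 ∂m - ∫ x in B j, (v x - c j)^2 ∂m
      ≤ ((m (B j)).toReal)⁻¹ * (∫ x in B j, v x ∂m)^2 :=
    fun j _ => ineq_aux (hBfin j) (hIv _ (hBfin j)) hv2.integrableOn (c j)
  have key0 : ∀ j ∈ Finset.univ, j ∉ K →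
      (∫ x in B j, v x ^ 2 ∂m - ∫ x in B j, (v x - c j)^2 ∂m) = 0 := by
    intro j _ hj
    have h0 : m (B j) = 0 := by
      by_contra hne
      exact hj (Finset.mem_filter.mpr ⟨Finset.mem_univ _, pos_iff_ne_zero.mpr hne⟩)
    rw [Measure.restrict_eq_zero.mpr h0]
    simp
  have sum1 : ∑ j, (∫ x in B j, v x ^ 2 ∂m - ∫ x in B j, (v x - c j)^2 ∂m) ≤ r := by
    rw [← Finset.sum_subset (Finset.subset_univ K) key0]
    exact Finset.sum_le_sum key1
  have sum2 : ∑ j, ∫ x in F j, v x ^ 2 ∂m ≤ ∑ j, ∫ x in B j, v x ^ 2 ∂m :=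
    Finset.sum_le_sum fun j _ => setIntegral_mono_set hv2.integrableOn
      (Filter.Eventually.of_forall fun x => sq_nonneg _) (hFB j).eventuallyLE
  have sum3 : ∀ j, ∫ x in E j, v x ^ 2 ∂m
      ≤ ∫ x in F j, v x ^ 2 ∂m + ε/(16*((N:ℝ)+1)) := by
    intro j
    rw [split_aux (hFc j).measurableSet (hEm j) (hFE j) hv2.integrableOn]
    have : ∫ x in E j \ F j, v x ^ 2 ∂m ≤ ε/(16*((N:ℝ)+1)) :=
      hδ₂' _ (lt_of_lt_of_le (hEFμ j) (min_le_left _ _))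
    linarith
  have hS1m : MeasurableSet (A' ∩ {x | v x < h}) :=
    hA'm.inter (measurableSet_lt hvm measurable_const)
  have hS1fin : m (A' ∩ {x | v x < h}) < ⊤ :=
    lt_of_le_of_lt (measure_mono Set.inter_subset_left) hA'fin.lt_top
  have hS1 : ∫ x in A' ∩ {x | v x < h}, v x ^ 2 ∂m ≤ ε/8 := by
    have hmono1 : ∫ x in A' ∩ {x | v x < h}, v x ^ 2 ∂m
        ≤ ∫ _ in A' ∩ {x | v x < h}, h ^ 2 ∂m := by
      refine setIntegral_mono_on hv2.integrableOn
        (integrableOn_const (hS1fin).ne) hS1m ?_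
      intro x hx
      exact sq_le_sq' (by have := hv0 x; linarith [hh.le]) hx.2.le
    rw [setIntegral_const, smul_eq_mul, measureReal_def] at hmono1
    have : (m (A' ∩ {x | v x < h})).toReal * h ^ 2 ≤ MA * h ^ 2 :=
      mul_le_mul_of_nonneg_right
        (ENNReal.toReal_mono hA'fin (measure_mono Set.inter_subset_left)) (sq_nonneg _)
    nlinarith
  have sum4 : ∫ x in A', v x ^ 2 ∂m ≤ (∑ j, ∫ x in E j, v x ^ 2 ∂m) + ε/8 + ε/8 := by
    have hU1 : ∫ x in A', v x ^ 2 ∂m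
        ≤ ∫ x in (⋃ j, E j) ∪ ((A' ∩ {x | v x < h}) ∪ T N), v x ^ 2 ∂m :=
      setIntegral_mono_set hv2.integrableOn
        (Filter.Eventually.of_forall fun x => sq_nonneg _) hcover.eventuallyLE
    have hU2 := union_le_aux (m := m) (MeasurableSet.iUnion hEm)
      (hS1m.union (hTm N)) hv2.integrableOn hv2.integrableOn
      (fun x => sq_nonneg (v x))
    have hU3 := union_le_aux (m := m) hS1m (hTm N)
      hv2.integrableOn hv2.integrableOn (fun x => sq_nonneg (v x))
    have hU4 : ∫ x in ⋃ j, E j, v x ^ 2 ∂m = ∑ j, ∫ x in E j, v x ^ 2 ∂m :=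
      integral_iUnion_fintype hEm hEdisj fun j => hv2.integrableOn
    rw [hU4] at hU2
    linarith
  have sum5 : ∑ j, ∫ x in B j, (v x - c j)^2 ∂m ≤ ε/8 + ε/8 + ε/8 := by
    have per_j : ∀ j, ∫ x in B j, (v x - c j)^2 ∂m
        ≤ h^2 * (m (E j)).toReal
          + (2*(ε/(16*((N:ℝ)+1))) + 2*(((N:ℝ)+1)*h)^2*δ₃) := by
      intro j
      have hBjm : MeasurableSet (B j) := (hBo j).measurableSet
      have hBFm : MeasurableSet (B j \ F j) := hBjm.diff (hFc j).measurableSet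
      have hBFfin : m (B j \ F j) < ⊤ :=
        lt_of_le_of_lt (measure_mono Set.diff_subset) (hBfin j).lt_top
      rw [split_aux (hFc j).measurableSet hBjm (hFB j) (hIq (c j) _ (hBfin j))]
      have t1 : ∫ x in F j, (v x - c j)^2 ∂m ≤ ∫ x in E j, (v x - c j)^2 ∂m :=
        setIntegral_mono_set (hIq (c j) _ (hEfin j))
          (Filter.Eventually.of_forall fun x => sq_nonneg _) (hFE j).eventuallyLE
      have t2 : ∫ x in E j, (v x - c j)^2 ∂m ≤ h^2 * (m (E j)).toReal := by
        have : ∫ x in E j, (v x - c j)^2 ∂m ≤ ∫ _ in E j, h^2 ∂m := by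
          refine setIntegral_mono_on (hIq (c j) _ (hEfin j))
            (integrableOn_const ((hEfin j).lt_top).ne) (hEm j) ?_
          intro x hx
          have h1 := hx.2.1
          have h2 := hx.2.2
          exact sq_le_sq' (by linarith [hh.le]) (by linarith)
        rw [setIntegral_const, smul_eq_mul, measureReal_def] at this
        linarith [this, mul_comm ((m (E j)).toReal) (h^2)]
      have t3 : ∫ x in B j \ F j, (v x - c j)^2 ∂m
          ≤ 2*(ε/(16*((N:ℝ)+1))) + 2*(((N:ℝ)+1)*h)^2*δ₃ := by
        have hconst : IntegrableOn (fun _ : X => 2*(c j)^2) (B j \ F j) m :=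
          integrableOn_const (hBFfin).ne
        have hmono2 : ∫ x in B j \ F j, (v x - c j)^2 ∂m
            ≤ ∫ x in B j \ F j, (2*v x^2 + 2*(c j)^2) ∂m := by
          refine setIntegral_mono_on (hIq (c j) _ hBFfin.ne)
            ((hv2.integrableOn.const_mul 2).add hconst) hBFm ?_
          intro x _
          nlinarith [sq_nonneg (v x + c j)]
        have heval : ∫ x in B j \ F j, (2*v x^2 + 2*(c j)^2) ∂m
            = 2*(∫ x in B j \ F j, v x^2 ∂m) + 2*(c j)^2*(m (B j \ F j)).toReal := by
          rw [integral_add (hv2.integrableOn.const_mul 2) hconst, integral_const_mul,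
            setIntegral_const, smul_eq_mul, measureReal_def]
          ring
        have hb1 : ∫ x in B j \ F j, v x^2 ∂m ≤ ε/(16*((N:ℝ)+1)) :=
          hδ₂' _ (lt_of_lt_of_le (hBFμ j) (min_le_left _ _))
        have hb2 : (m (B j \ F j)).toReal ≤ δ₃ :=
          ENNReal.toReal_le_of_le_ofReal hδ₃.le
            (le_of_lt (lt_of_lt_of_le (hBFμ j) (min_le_right _ _)))
        have hb3 : (c j)^2 ≤ (((N:ℝ)+1)*h)^2 := pow_le_pow_left₀ (hc0 j).le (hcN j) 2
        have hb4 : 2*(c j)^2*(m (B j \ F j)).toReal ≤ 2*(((N:ℝ)+1)*h)^2*δ₃ := by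
          have h1 : 0 ≤ (c j)^2 := sq_nonneg _
          have h2 : 0 ≤ (m (B j \ F j)).toReal := ENNReal.toReal_nonneg
          nlinarith
        linarith [hmono2, heval, hb1, hb2, hb3, hb4]
      linarith
    have hsum : ∑ j, ∫ x in B j, (v x - c j)^2 ∂m
        ≤ ∑ j : Fin N, (h^2 * (m (E j)).toReal
          + (2*(ε/(16*((N:ℝ)+1))) + 2*(((N:ℝ)+1)*h)^2*δ₃)) :=
      Finset.sum_le_sum fun j _ => per_j j
    have hsum2 : ∑ j : Fin N, (h^2 * (m (E j)).toReal
          + (2*(ε/(16*((N:ℝ)+1))) + 2*(((N:ℝ)+1)*h)^2*δ₃))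
        = h^2 * (∑ j, (m (E j)).toReal)
          + (N:ℝ) * (2*(ε/(16*((N:ℝ)+1))) + 2*(((N:ℝ)+1)*h)^2*δ₃) := by
      rw [Finset.sum_add_distrib, ← Finset.mul_sum, Finset.sum_const, Finset.card_univ,
        Fintype.card_fin, nsmul_eq_mul]
    have hsumE : ∑ j, (m (E j)).toReal ≤ MA := by
      rw [← ENNReal.toReal_sum (fun j _ => hEfin j)]
      refine ENNReal.toReal_mono hA'fin ?_
      have : ∑ j, m (E j) = m (⋃ j, E j) := by
        rw [measure_iUnion hEdisj hEm, tsum_fintype]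
      rw [this]
      exact measure_mono (Set.iUnion_subset hEsub)
    have hb5 : h^2 * (∑ j, (m (E j)).toReal) ≤ ε/8 := by
      have h1 : h^2 * (∑ j, (m (E j)).toReal) ≤ h^2 * MA :=
        mul_le_mul_of_nonneg_left hsumE (sq_nonneg _)
      linarith
    have hb6 : (N:ℝ) * (2*(ε/(16*((N:ℝ)+1)))) ≤ ε/8 := by
      have hN1 : (N:ℝ) ≤ (N:ℝ)+1 := by linarith
      have hpos : (0:ℝ) < 16*((N:ℝ)+1) := by positivity
      have heq2 : ((N:ℝ)+1) * (2*(ε/(16*((N:ℝ)+1)))) = ε/8 := by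
        field_simp
        ring
      have := mul_le_mul_of_nonneg_right hN1
        (show (0:ℝ) ≤ 2*(ε/(16*((N:ℝ)+1))) by positivity)
      linarith
    have hb7 : (N:ℝ) * (2*(((N:ℝ)+1)*h)^2*δ₃) ≤ ε/8 := by
      have heq3 : δ₃ * (2*(N:ℝ)*(((N:ℝ)+1)*h)^2 + 1) = ε/8 := by
        rw [hδ₃_def]
        field_simp
      nlinarith [hδ₃.le, sq_nonneg (((N:ℝ)+1)*h)]
    have hdistrib : (N:ℝ) * (2*(ε/(16*((N:ℝ)+1))) + 2*(((N:ℝ)+1)*h)^2*δ₃)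
        = (N:ℝ) * (2*(ε/(16*((N:ℝ)+1)))) + (N:ℝ) * (2*(((N:ℝ)+1)*h)^2*δ₃) := by ring
    linarith
  -- combine everything
  have hsum3' : ∑ j, ∫ x in E j, v x ^ 2 ∂m
      ≤ ∑ j, ∫ x in F j, v x ^ 2 ∂m + ε/16 := by
    have h1 : ∑ j, ∫ x in E j, v x ^ 2 ∂m
        ≤ ∑ j : Fin N, (∫ x in F j, v x ^ 2 ∂m + ε/(16*((N:ℝ)+1))) :=
      Finset.sum_le_sum fun j _ => sum3 j
    rw [Finset.sum_add_distrib, Finset.sum_const, Finset.card_univ, Fintype.card_fin,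
      nsmul_eq_mul] at h1
    have hN1 : (N:ℝ) ≤ (N:ℝ)+1 := by linarith
    have heq2 : ((N:ℝ)+1) * (ε/(16*((N:ℝ)+1))) = ε/16 := by
      field_simp
    have := mul_le_mul_of_nonneg_right hN1
      (show (0:ℝ) ≤ ε/(16*((N:ℝ)+1)) by positivity)
    linarith
  have hfinal : ∑ j, (∫ x in B j, v x ^ 2 ∂m - ∫ x in B j, (v x - c j)^2 ∂m)
      = ∑ j, ∫ x in B j, v x ^ 2 ∂m - ∑ j, ∫ x in B j, (v x - c j)^2 ∂m :=
    Finset.sum_sub_distrib _ _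
  linarith [sum1, sum2, hsum3', sum4, sum5, hI', hfinal]
end

section
/- Let (X, d) be a geodesic (length) metric space and Ω⁺, Ω⁻ disjoint nonempty open subsets of X. Define r(Ω^±) := sup_{x ∈ Ω^±} inf_{y ∈ ∂Ω^±} d(x, y) (the inradius). Then r(Ω⁺) + r(Ω⁻) ≤ diam(X). -/
open Set EMetric ENNReal

/-- The first exit point of an almost-geodesic from an open set. -/
lemma cross_aux {X : Type*} [MetricSpace X] (Ω : Set X) (hΩ : IsOpen Ω)
    (γ : ℝ → X) (L : ℝ) (hL : 0 < L)
    (hlip : ∀ s t : ℝ, s ∈ Icc (0 : ℝ) 1 → t ∈ Icc (0 : ℝ) 1 →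
      dist (γ s) (γ t) ≤ L * |s - t|)
    (h0 : γ 0 ∈ Ω) (h1 : γ 1 ∉ Ω) :
    ∃ t ∈ Icc (0 : ℝ) 1, γ t ∈ frontier Ω ∧ (∀ s ∈ Ico (0 : ℝ) t, γ s ∈ Ω) ∧
      infEdist (γ 0) (frontier Ω) ≤ ENNReal.ofReal (L * t) := by
  set S : Set ℝ := {t ∈ Icc (0 : ℝ) 1 | γ t ∉ Ω} with hS
  have h1S : (1 : ℝ) ∈ S := ⟨⟨zero_le_one, le_refl 1⟩, h1⟩
  have hSne : S.Nonempty := ⟨1, h1S⟩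
  have hSbdd : BddBelow S := ⟨0, fun t ht => ht.1.1⟩
  set T : ℝ := sInf S with hT
  have hT1 : T ≤ 1 := csInf_le hSbdd h1S
  have hT0 : 0 ≤ T := le_csInf hSne fun t ht => ht.1.1
  have hIco : ∀ s ∈ Ico (0 : ℝ) T, γ s ∈ Ω := by
    intro s hs
    by_contra hsn
    exact absurd (csInf_le hSbdd ⟨⟨hs.1, hs.2.le.trans hT1⟩, hsn⟩) (not_le.mpr hs.2)
  have hTnot : γ T ∉ Ω := by
    intro hmem
    have hTlt1 : T < 1 := by
      rcases eq_or_lt_of_le hT1 with h | h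
      · exact absurd (h ▸ hmem) h1
      · exact h
    obtain ⟨r, hr, hball⟩ := Metric.isOpen_iff.mp hΩ (γ T) hmem
    set t₁ : ℝ := min 1 (T + r / (2 * L)) with ht₁
    have ht₁T : T < t₁ := lt_min hTlt1 (by linarith [div_pos hr (mul_pos two_pos hL)])
    have hlb : t₁ ∈ lowerBounds S := by
      intro s hs
      by_contra hlt
      push_neg at hlt
      have hsT' : T ≤ s := csInf_le hSbdd hs
      have hd : dist (γ s) (γ T) ≤ L * |s - T| :=
        hlip s T ⟨hs.1.1, hs.1.2⟩ ⟨hT0, hT1⟩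
      have habs : |s - T| = s - T := abs_of_nonneg (by linarith)
      have : s - T < r / (2 * L) := by
        have := hlt.trans_le (min_le_right _ _)
        linarith
      have hd2 : dist (γ s) (γ T) < r := by
        rw [habs] at hd
        calc dist (γ s) (γ T) ≤ L * (s - T) := hd
          _ < L * (r / (2 * L)) := by
              apply mul_lt_mul_of_pos_left this hL
          _ = r / 2 := by field_simp
          _ < r := by linarith
      exact hs.2 (hball hd2)
    exact absurd (le_csInf hSne hlb) (not_le.mpr ht₁T)
  have hTpos : 0 < T := by
    rcases eq_or_lt_of_le hT0 with h | h
    · exact absurd (h ▸ h0) hTnot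
    · exact h
  have hclos : γ T ∈ closure Ω := by
    rw [Metric.mem_closure_iff]
    intro δ hδ
    set c : ℝ := min T (δ / (2 * L)) with hc
    have hcpos : 0 < c := lt_min hTpos (by positivity)
    have hcT : c ≤ T := min_le_left _ _
    refine ⟨γ (T - c), hIco (T - c) ⟨by linarith, by linarith⟩, ?_⟩
    have hd : dist (γ T) (γ (T - c)) ≤ L * |T - (T - c)| :=
      hlip T (T - c) ⟨hT0, hT1⟩ ⟨by linarith, by linarith⟩
    have : |T - (T - c)| = c := by rw [abs_of_nonneg] <;> linarith
    rw [this] at hd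
    calc dist (γ T) (γ (T - c)) ≤ L * c := hd
      _ ≤ L * (δ / (2 * L)) := by
          exact mul_le_mul_of_nonneg_left (min_le_right _ _) hL.le
      _ = δ / 2 := by field_simp
      _ < δ := by linarith
  have hfr : γ T ∈ frontier Ω := by
    rw [hΩ.frontier_eq]; exact ⟨hclos, hTnot⟩
  refine ⟨T, ⟨hT0, hT1⟩, hfr, hIco, ?_⟩
  calc infEdist (γ 0) (frontier Ω) ≤ edist (γ 0) (γ T) := infEdist_le_edist_of_mem hfr
    _ = ENNReal.ofReal (dist (γ 0) (γ T)) := edist_dist _ _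
    _ ≤ ENNReal.ofReal (L * T) := by
        apply ENNReal.ofReal_le_ofReal
        have := hlip 0 T ⟨le_refl 0, zero_le_one⟩ ⟨hT0, hT1⟩
        rwa [abs_of_nonpos (by linarith), neg_sub, sub_zero] at this

/-- Let `(X,d)` be a length (geodesic) metric space — encoded by the existence, for all
`x y` and `ε > 0`, of an almost-geodesic path from `x` to `y` of length at most
`d(x,y) + ε` — and let `Ω⁺, Ω⁻` be disjoint nonempty open subsets of `X` with nonempty
boundaries. With `r(Ω^±) = sup_{x ∈ Ω^±} inf_{y ∈ ∂Ω^±} d(x,y)` the inradius,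
one has `r(Ω⁺) + r(Ω⁻) ≤ diam X`. -/
theorem stmt_12 {X : Type*} [MetricSpace X]
    (hlen : ∀ x y : X, ∀ ε > (0 : ℝ), ∃ γ : ℝ → X, γ 0 = x ∧ γ 1 = y ∧
      ∀ s t : ℝ, s ∈ Icc (0 : ℝ) 1 → t ∈ Icc (0 : ℝ) 1 →
        dist (γ s) (γ t) ≤ (dist x y + ε) * |s - t|)
    (Ωp Ωn : Set X) (hop : IsOpen Ωp) (hon : IsOpen Ωn)
    (hnep : Ωp.Nonempty) (hnen : Ωn.Nonempty) (hdisj : Disjoint Ωp Ωn)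
    (hbp : (frontier Ωp).Nonempty) (hbn : (frontier Ωn).Nonempty) :
    (⨆ x ∈ Ωp, infEdist x (frontier Ωp)) + (⨆ x ∈ Ωn, infEdist x (frontier Ωn)) ≤
      diam (univ : Set X) := by
  refine ENNReal.biSup_add_biSup_le hnep hnen fun x hx y hy => ?_
  refine ENNReal.le_of_forall_pos_le_add fun ε hε _ => ?_
  have hεR : (0 : ℝ) < (ε : ℝ) := hε
  obtain ⟨γ, hγ0, hγ1, hlip⟩ := hlen x y (ε : ℝ) hεR
  set L : ℝ := dist x y + ε with hLdef
  have hL : 0 < L := by have := dist_nonneg (x := x) (y := y); positivity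
  have hyp : y ∉ Ωp := fun h => (hdisj.ne_of_mem h hy) rfl
  have hxn : x ∉ Ωn := fun h => (hdisj.ne_of_mem hx h) rfl
  obtain ⟨T, hTmem, hTfr, hTico, hTle⟩ :=
    cross_aux Ωp hop γ L hL hlip (hγ0 ▸ hx) (hγ1 ▸ hyp)
  have hlip' : ∀ s t : ℝ, s ∈ Icc (0 : ℝ) 1 → t ∈ Icc (0 : ℝ) 1 →
      dist (γ (1 - s)) (γ (1 - t)) ≤ L * |s - t| := by
    intro s t hs ht
    have := hlip (1 - s) (1 - t) ⟨by linarith [hs.2], by linarith [hs.1]⟩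
      ⟨by linarith [ht.2], by linarith [ht.1]⟩
    rwa [show (1 - s) - (1 - t) = -(s - t) by ring, abs_neg] at this
  obtain ⟨S, hSmem, hSfr, hSico, hSle⟩ :=
    cross_aux Ωn hon (fun u => γ (1 - u)) L hL hlip'
      (by simpa [hγ1] using hy) (by simpa [hγ0] using hxn)
  -- T ≤ 1 - S
  have hTS : T ≤ 1 - S := by
    by_contra hcon
    push_neg at hcon
    set v : ℝ := ((1 - S) + T) / 2 with hv
    have hv1 : 1 - S < v := by simp only [hv]; linarith
    have hv2 : v < T := by simp only [hv]; linarith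
    have hv0 : 0 ≤ v := by
      have : 0 ≤ 1 - S := by linarith [hSmem.2]
      linarith
    have hγvp : γ v ∈ Ωp := hTico v ⟨hv0, hv2⟩
    have hγvn : γ v ∈ Ωn := by
      have := hSico (1 - v) ⟨by linarith [hTmem.2], by linarith⟩
      simpa [show 1 - (1 - v) = v by ring] using this
    exact (hdisj.ne_of_mem hγvp hγvn) rfl
  have hxT : infEdist x (frontier Ωp) ≤ ENNReal.ofReal (L * T) := hγ0 ▸ hTle
  have hyS : infEdist y (frontier Ωn) ≤ ENNReal.ofReal (L * S) := by
    have := hSle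
    simpa [hγ1] using this
  calc infEdist x (frontier Ωp) + infEdist y (frontier Ωn)
      ≤ ENNReal.ofReal (L * T) + ENNReal.ofReal (L * S) := add_le_add hxT hyS
    _ = ENNReal.ofReal (L * T + L * S) := by
        rw [ENNReal.ofReal_add (mul_nonneg hL.le hTmem.1) (mul_nonneg hL.le hSmem.1)]
    _ ≤ ENNReal.ofReal L := by
        apply ENNReal.ofReal_le_ofReal
        nlinarith [hTmem.1, hSmem.1, hTS]
    _ = edist x y + ENNReal.ofReal (ε : ℝ) := by
        rw [hLdef, ENNReal.ofReal_add dist_nonneg hεR.le, edist_dist]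
    _ = edist x y + (ε : ℝ≥0∞) := by rw [ENNReal.ofReal_coe_nnreal]
    _ ≤ diam (univ : Set X) + ε := by
        gcongr
        exact edist_le_diam_of_mem (mem_univ x) (mem_univ y)
end
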